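/- The null space matrix N_R = [[g,0],[0,0],[0,I₃],[0,0]] ∈ ℝ^{15×4} associated with the SE₂(3) IMU state parameterization satisfies H_i N_R + H_j N_R' = 0 where H_i = −A·F_{ij}, H_j = A, A is any 15×15 matrix whose structure is block-diagonal with identity in the first nine rows, F_{ij} = [[I,0,0,⋆],[Δt g^∧,I,0,⋆],[½Δt² g^∧,Δt I,I,⋆],[0,0,0,I]], and the bias columns of N_R are zero; i.e., (−F_{ij}) N_R + N_R = 0 when A = I. -/

import Mathlib

open Matrix

/-- The skew-symmetric matrix `a^∧` of `a ∈ ℝ³`. -/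
def hat (a : Fin 3 → ℝ) : Matrix (Fin 3) (Fin 3) ℝ :=
  !![0, -a 2, a 1; a 2, 0, -a 0; -a 1, a 0, 0]

/-- Index type for the 15-dimensional IMU error state `(δφ, δv, δr, δb)`. -/
abbrev Idx15 := Fin 3 ⊕ (Fin 3 ⊕ (Fin 3 ⊕ Fin 6))

/-- The 15×15 direct-integration Jacobian
`F_{ij} = [[I,0,0,⋆],[Δt g^∧,I,0,⋆],[½Δt² g^∧,Δt I,I,⋆],[0,0,0,I]]`
under the `SE₂(3)` parameterization, with arbitrary bias blocks `S₁, S₂, S₃`. -/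
noncomputable def F15 (g : Fin 3 → ℝ) (Δt : ℝ)
    (S₁ S₂ S₃ : Matrix (Fin 3) (Fin 6) ℝ) : Matrix Idx15 Idx15 ℝ :=
  fromBlocks 1 (fromCols 0 (fromCols 0 S₁))
    (fromRows (Δt • hat g) (fromRows (((1 : ℝ) / 2 * Δt ^ 2) • hat g) 0))
    (fromBlocks 1 (fromCols 0 S₂)
      (fromRows (Δt • (1 : Matrix (Fin 3) (Fin 3) ℝ)) 0)
      (fromBlocks 1 S₃ 0 1))

/-- The null space `N_R = [[g,0],[0,0],[0,I₃],[0,0]] ∈ ℝ^{15×4}` for the `SE₂(3)`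
IMU state parameterization. -/
def N15 (g : Fin 3 → ℝ) : Matrix Idx15 (Fin 1 ⊕ Fin 3) ℝ :=
  fromBlocks (Matrix.of fun i (_ : Fin 1) => g i) 0
    0 (fromRows 0 (fromRows 1 0))

lemma hat_g (g : Fin 3 → ℝ) : hat g * Matrix.of (fun i (_ : Fin 1) => g i) = 0 := by
  ext i j
  fin_cases i <;> simp [hat, Matrix.mul_apply, Fin.sum_univ_three] <;> ring

/-- `F_{ij} N_R = N_R`, hence `(−F_{ij}) N_R + N_R = 0`: the error Jacobian row
`[−F_{ij}, I]` annihilates the stacked null space. -/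
theorem F15_N15 (g : Fin 3 → ℝ) (Δt : ℝ) (S₁ S₂ S₃ : Matrix (Fin 3) (Fin 6) ℝ) :
    F15 g Δt S₁ S₂ S₃ * N15 g = N15 g ∧
    (-(F15 g Δt S₁ S₂ S₃)) * N15 g + N15 g = 0 := by
  have h : F15 g Δt S₁ S₂ S₃ * N15 g = N15 g := by
    ext i j
    simp only [F15, N15, Matrix.mul_apply]
    rcases i with i | i | i | i <;> rcases j with j | j <;>
      simp [Fintype.sum_sum_type, fromBlocks, Matrix.mul_apply,
        Fin.sum_univ_three, hat, Matrix.one_apply] <;>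
      fin_cases i <;> simp [Fin.sum_univ_three] <;> ring
  exact ⟨h, by rw [Matrix.neg_mul, h]; simp⟩
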